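/- arXiv:1205.4495 — 2 statements merged into one kernel-verified Lean document; each statement's English description precedes it below -/
import Mathlib

section
/- For all nonzero complex numbers z, q, α, the identity (1 − z/(αq)) · (q⁴/z − q³α³ − z q²α² − z² q α) = z³ + q⁴/z − (q³α³ + q³/α) holds. (This is the matrix factorization of the Hori–Vafa potential of the teardrop orbifold corresponding to the balanced torus fiber with non-unitary holonomy α satisfying 3α⁴ = 1.) -/
/-- Matrix factorization of the Hori–Vafa potential `W(z) = z³ + q⁴/z` of the
teardrop orbifold corresponding to the balanced torus fiber with (non-unitary)
holonomy `α`: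
`(1 − z/(αq)) (q⁴/z − q³α³ − zq²α² − z²qα) = z³ + q⁴/z − (q³α³ + q³/α)`. -/
theorem teardrop_matrix_factorization (z q α : ℂ)
    (hz : z ≠ 0) (hq : q ≠ 0) (hα : α ≠ 0) :
    (1 - z / (α * q)) * (q ^ 4 / z - q ^ 3 * α ^ 3 - z * q ^ 2 * α ^ 2 - z ^ 2 * q * α)
      = z ^ 3 + q ^ 4 / z - (q ^ 3 * α ^ 3 + q ^ 3 / α) := by
  field_simp
  ring
end

section
/- Let q be a positive real number, u a real number, c any complex number, and z, α nonzero complex numbers. Writing q^r for the real power of q (coerced to ℂ), the identity (1 − z/(q^(1−u)·α)) · (q^(4/3)/z − q^(3−3u)·α³ − z·q^(2−2u)·α² − z²·q^(1−u)·α − c·q^(1−u)·α) = z³ + q^(4/3)/z + c·z − (q^(3−3u)·α³ + q^(1/3+u)/α + c·q^(1−u)·α) holds. (This is the matrix factorization of the bulk deformed potential W^𝔟 corresponding to the fiber L_u, obtained by adding the orbifold holomorphic strip contribution c·q^(1−u)·α.) -/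
/-- Matrix factorization of the bulk deformed potential
`W^𝔟(z) = z³ + q^(4/3)/z + c z` of the teardrop orbifold corresponding to the
fiber `L_u`, obtained by adding the orbifold holomorphic strip contribution
`c·q^(1−u)·α`.  Real exponents denote real powers of the positive real Novikov
parameter `q`, coerced to `ℂ`. -/
theorem teardrop_bulk_matrix_factorization (q : ℝ) (hq : 0 < q) (u : ℝ)
    (c : ℂ) (z α : ℂ) (hz : z ≠ 0) (hα : α ≠ 0) :
    (1 - z / (((q ^ ((1 : ℝ) - u) : ℝ) : ℂ) * α)) *
      (((q ^ ((4 : ℝ) / 3) : ℝ) : ℂ) / z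
        - ((q ^ (3 - 3 * u) : ℝ) : ℂ) * α ^ 3
        - z * ((q ^ (2 - 2 * u) : ℝ) : ℂ) * α ^ 2
        - z ^ 2 * ((q ^ ((1 : ℝ) - u) : ℝ) : ℂ) * α
        - c * ((q ^ ((1 : ℝ) - u) : ℝ) : ℂ) * α)
    = z ^ 3 + ((q ^ ((4 : ℝ) / 3) : ℝ) : ℂ) / z + c * z
      - (((q ^ (3 - 3 * u) : ℝ) : ℂ) * α ^ 3
        + ((q ^ ((1 : ℝ) / 3 + u) : ℝ) : ℂ) / α
        + c * ((q ^ ((1 : ℝ) - u) : ℝ) : ℂ) * α) := by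
  have hA : (0:ℝ) < q ^ ((1:ℝ) - u) := Real.rpow_pos_of_pos hq _
  have hAne : (((q ^ ((1:ℝ) - u) : ℝ) : ℂ)) ≠ 0 := by
    exact_mod_cast hA.ne'
  have h2 : (q ^ (2 - 2*u) : ℝ) = (q ^ ((1:ℝ) - u)) ^ 2 := by
    rw [← Real.rpow_natCast (q ^ ((1:ℝ) - u)) 2, ← Real.rpow_mul hq.le]
    norm_num; ring_nf
  have h3 : (q ^ (3 - 3*u) : ℝ) = (q ^ ((1:ℝ) - u)) ^ 3 := by
    rw [← Real.rpow_natCast (q ^ ((1:ℝ) - u)) 3, ← Real.rpow_mul hq.le]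
    norm_num; ring_nf
  have h4 : (q ^ ((4:ℝ)/3) : ℝ) = q ^ ((1:ℝ) - u) * q ^ ((1:ℝ)/3 + u) := by
    rw [← Real.rpow_add hq]; norm_num
  rw [h2, h3, h4]
  push_cast
  field_simp
  ring
end
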